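/- Let X be an affine regulous variety (a Euclidean-closed constructible subset A of an affine real algebraic variety, with its sheaf of regulous functions) and let U ⊆ X be open in the constructible topology. Then the locally ringed space (U, R⁰_X|_U) is isomorphic to an affine regulous variety. Concretely, if f : V → ℝ is a regulous function with Z(f) = X \ U, then U is regulously isomorphic to the Euclidean-closed constructible subset {(x, y) ∈ X × ℝ : f(x)·y = 1} of V × ℝ via x ↦ (x, 1/f(x)). -/

import Mathlib

open MvPolynomial Set

/-- Points of the ambient affine space `ℝ^m`. -/
abbrev Pt (m : ℕ) : Type := Fin m → ℝ

/-- A subset of `ℝ^m` is Zariski closed if it is the common zero set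
of a family of real polynomials. -/
def ZarClosed {m : ℕ} (Z : Set (Pt m)) : Prop :=
  ∃ S : Set (MvPolynomial (Fin m) ℝ), Z = {x | ∀ p ∈ S, eval x p = 0}

/-- Zariski locally closed subsets of `ℝ^m`. -/
def ZarLocClosed {m : ℕ} (L : Set (Pt m)) : Prop :=
  ∃ Z Z' : Set (Pt m), ZarClosed Z ∧ ZarClosed Z' ∧ L = Z \ Z'

/-- A set is constructible if it is a finite union of Zariski locally closed sets. -/
def Constructible {m : ℕ} (A : Set (Pt m)) : Prop :=
  ∃ (k : ℕ) (L : Fin k → Set (Pt m)), (∀ i, ZarLocClosed (L i)) ∧ A = ⋃ i, L i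

/-- A set is irreducible (for the Zariski topology). -/
def ZarIrreducible {m : ℕ} (S : Set (Pt m)) : Prop :=
  S.Nonempty ∧ ∀ Z Z' : Set (Pt m), ZarClosed Z → ZarClosed Z' → S ⊆ Z ∪ Z' →
    S ⊆ Z ∨ S ⊆ Z'

/-- A stratification of `A`: a finite family of pairwise disjoint Zariski locally
closed sets whose union is `A`. -/
def IsStratification {m : ℕ} (A : Set (Pt m)) {k : ℕ} (S : Fin k → Set (Pt m)) : Prop :=
  (∀ i, ZarLocClosed (S i)) ∧ (Pairwise fun i j => Disjoint (S i) (S j)) ∧ (⋃ i, S i) = A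

/-- `f` is a regular function on `A ⊆ ℝ^m`: a quotient of polynomials whose
denominator does not vanish on `A`. -/
def RegularFnOn {m : ℕ} (A : Set (Pt m)) (f : Pt m → ℝ) : Prop :=
  ∃ p q : MvPolynomial (Fin m) ℝ, ∀ x ∈ A, eval x q ≠ 0 ∧ f x * eval x q = eval x p

/-- A regular map `A → ℝ^k` (componentwise regular). -/
def RegularMapOn {m k : ℕ} (A : Set (Pt m)) (f : Pt m → Pt k) : Prop :=
  ∀ j, RegularFnOn A fun x => f x j

/-- A regulous function on `A`: Euclidean-continuous on `A` and regular on each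
stratum of some stratification of `A`. -/
def RegulousFnOn {m : ℕ} (A : Set (Pt m)) (f : Pt m → ℝ) : Prop :=
  ContinuousOn f A ∧
    ∃ (k : ℕ) (S : Fin k → Set (Pt m)), IsStratification A S ∧ ∀ i, RegularFnOn (S i) f

/-- A regulous map `A → ℝ^k`. -/
def RegulousMapOn {m k : ℕ} (A : Set (Pt m)) (f : Pt m → Pt k) : Prop :=
  ContinuousOn f A ∧
    ∃ (r : ℕ) (S : Fin r → Set (Pt m)), IsStratification A S ∧ ∀ i, RegularMapOn (S i) f

/-- `U` is an open subset of `X` in the constructible topology: the complement in `X`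
of a Euclidean-closed constructible set. -/
def ConstructibleOpenIn {m : ℕ} (X U : Set (Pt m)) : Prop :=
  U ⊆ X ∧ ∃ F : Set (Pt m), Constructible F ∧ IsClosed F ∧ U = X \ F


local notation "X'" => MvPolynomial.X

section RegHelpers
variable {m : ℕ}

lemma zarClosed_univ : ZarClosed (univ : Set (Pt m)) := ⟨∅, by simp⟩

lemma zarClosed_empty : ZarClosed (∅ : Set (Pt m)) :=
  ⟨{1}, by ext x; simp⟩

lemma ZarClosed.inter {Z Z' : Set (Pt m)} (h : ZarClosed Z) (h' : ZarClosed Z') :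
    ZarClosed (Z ∩ Z') := by
  obtain ⟨S, rfl⟩ := h; obtain ⟨S', rfl⟩ := h'
  exact ⟨S ∪ S', by ext x; simp only [mem_inter_iff, mem_setOf_eq, mem_union]; aesop⟩

lemma ZarClosed.union {Z Z' : Set (Pt m)} (h : ZarClosed Z) (h' : ZarClosed Z') :
    ZarClosed (Z ∪ Z') := by
  obtain ⟨S, rfl⟩ := h; obtain ⟨S', rfl⟩ := h'
  refine ⟨Set.image2 (· * ·) S S', ?_⟩
  ext x
  simp only [mem_union, mem_setOf_eq, Set.mem_image2]
  constructor
  · rintro (h | h) r ⟨p, hp, q, hq, rfl⟩ <;> simp [h _ ‹_›]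
  · intro h
    by_cases hc : ∀ p ∈ S, eval x p = 0
    · exact Or.inl hc
    · push_neg at hc
      obtain ⟨p, hp, hpx⟩ := hc
      refine Or.inr fun q hq => ?_
      have := h _ ⟨p, hp, q, hq, rfl⟩
      simp at this
      exact this.resolve_left hpx

lemma ZarClosed.zarLocClosed {Z : Set (Pt m)} (h : ZarClosed Z) : ZarLocClosed Z :=
  ⟨Z, ∅, h, zarClosed_empty, by simp⟩

lemma ZarLocClosed.inter {L L' : Set (Pt m)} (h : ZarLocClosed L) (h' : ZarLocClosed L') :
    ZarLocClosed (L ∩ L') := by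
  obtain ⟨Z, W, hZ, hW, rfl⟩ := h
  obtain ⟨Z', W', hZ', hW', rfl⟩ := h'
  exact ⟨Z ∩ Z', W ∪ W', hZ.inter hZ', hW.union hW', by ext x; simp; tauto⟩

lemma ZarLocClosed.diff_closed {L Z : Set (Pt m)} (h : ZarLocClosed L) (hZ : ZarClosed Z) :
    ZarLocClosed (L \ Z) := by
  obtain ⟨W, W', hW, hW', rfl⟩ := h
  exact ⟨W, W' ∪ Z, hW, hW'.union hZ, by ext x; simp; tauto⟩

lemma ZarLocClosed.inter_closed {L Z : Set (Pt m)} (h : ZarLocClosed L) (hZ : ZarClosed Z) :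
    ZarLocClosed (L ∩ Z) := by
  obtain ⟨W, W', hW, hW', rfl⟩ := h
  exact ⟨W ∩ Z, W', hW.inter hZ, hW', by ext x; simp; tauto⟩

/-- List characterization of constructibility. -/
lemma constructible_iff_list {A : Set (Pt m)} :
    Constructible A ↔ ∃ M : List (Set (Pt m)),
      (∀ s ∈ M, ZarLocClosed s) ∧ A = ⋃ s ∈ M, s := by
  constructor
  · rintro ⟨k, L, hL, rfl⟩
    refine ⟨List.ofFn L, fun s hs => ?_, ?_⟩
    · rw [List.mem_ofFn] at hs; obtain ⟨i, rfl⟩ := hs; exact hL i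
    · ext x
      simp only [mem_iUnion, exists_prop, List.mem_ofFn]
      constructor
      · rintro ⟨i, hi⟩; exact ⟨L i, ⟨i, rfl⟩, hi⟩
      · rintro ⟨s, ⟨i, rfl⟩, hx⟩; exact ⟨i, hx⟩
  · rintro ⟨M, hM, rfl⟩
    refine ⟨M.length, M.get, fun i => hM _ (M.get_mem _), ?_⟩
    ext x; simp
    constructor
    · rintro ⟨s, hs, hx⟩
      obtain ⟨i, rfl⟩ := List.mem_iff_get.mp hs
      exact ⟨i, hx⟩
    · rintro ⟨i, hx⟩; exact ⟨M.get i, M.get_mem _, hx⟩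

lemma Constructible.union {A B : Set (Pt m)} (h : Constructible A) (h' : Constructible B) :
    Constructible (A ∪ B) := by
  rw [constructible_iff_list] at *
  obtain ⟨M, hM, rfl⟩ := h
  obtain ⟨N, hN, rfl⟩ := h'
  refine ⟨M ++ N, ?_, ?_⟩
  · intro s hs; rw [List.mem_append] at hs; rcases hs with hs | hs
    exacts [hM s hs, hN s hs]
  · ext x
    simp only [mem_union, mem_iUnion, exists_prop, List.mem_append]
    constructor
    · rintro (⟨s, hs, hx⟩ | ⟨s, hs, hx⟩)
      exacts [⟨s, Or.inl hs, hx⟩, ⟨s, Or.inr hs, hx⟩]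
    · rintro ⟨s, hs | hs, hx⟩
      exacts [Or.inl ⟨s, hs, hx⟩, Or.inr ⟨s, hs, hx⟩]

lemma Constructible.inter {A B : Set (Pt m)} (h : Constructible A) (h' : Constructible B) :
    Constructible (A ∩ B) := by
  rw [constructible_iff_list] at *
  obtain ⟨M, hM, rfl⟩ := h
  obtain ⟨N, hN, rfl⟩ := h'
  refine ⟨M.flatMap (fun s => N.map (fun t => s ∩ t)), ?_, ?_⟩
  · intro s hs
    simp only [List.mem_flatMap, List.mem_map] at hs
    obtain ⟨a, ha, b, hb, rfl⟩ := hs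
    exact (hM a ha).inter (hN b hb)
  · ext x
    simp only [mem_inter_iff, mem_iUnion, exists_prop, List.mem_flatMap, List.mem_map]
    constructor
    · rintro ⟨⟨s, hs, hx⟩, ⟨t, ht, hx'⟩⟩
      exact ⟨s ∩ t, ⟨s, hs, t, ht, rfl⟩, hx, hx'⟩
    · rintro ⟨u, ⟨s, hs, t, ht, rfl⟩, hx, hx'⟩
      exact ⟨⟨s, hs, hx⟩, ⟨t, ht, hx'⟩⟩

lemma ZarLocClosed.constructible {L : Set (Pt m)} (h : ZarLocClosed L) : Constructible L :=
  ⟨1, fun _ => L, fun _ => h, by rw [iUnion_const]⟩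

lemma ZarLocClosed.compl_constructible {L : Set (Pt m)} (h : ZarLocClosed L) :
    Constructible Lᶜ := by
  obtain ⟨Z, Z', hZ, hZ', rfl⟩ := h
  have : (Z \ Z')ᶜ = (univ \ Z) ∪ Z' := by
    ext x; simp [not_and_or]; tauto
  rw [this]
  exact (ZarLocClosed.constructible ⟨univ, Z, zarClosed_univ, hZ, rfl⟩).union
    hZ'.zarLocClosed.constructible

lemma compl_biUnion_list :
    ∀ M : List (Set (Pt m)), (∀ s ∈ M, ZarLocClosed s) → Constructible (⋃ s ∈ M, s)ᶜ := by
  intro M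
  induction M with
  | nil =>
    intro _
    simpa using zarClosed_univ.zarLocClosed.constructible
  | cons s M ih =>
    intro hM
    have heq : (⋃ t ∈ s :: M, t)ᶜ = sᶜ ∩ (⋃ t ∈ M, t)ᶜ := by
      simp only [List.mem_cons]
      rw [show (⋃ t, ⋃ (_ : t = s ∨ t ∈ M), t) = s ∪ ⋃ t ∈ M, t by
        ext x; simp only [mem_iUnion, exists_prop, mem_union]; aesop]
      rw [compl_union]
    rw [heq]
    exact ((hM s List.mem_cons_self).compl_constructible).inter
      (ih fun t ht => hM t (List.mem_cons_of_mem _ ht))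

lemma Constructible.compl {A : Set (Pt m)} (h : Constructible A) : Constructible Aᶜ := by
  obtain ⟨M, hM, rfl⟩ := constructible_iff_list.mp h
  exact compl_biUnion_list M hM

lemma constructible_iUnion {k : ℕ} {A : Fin k → Set (Pt m)}
    (h : ∀ i, Constructible (A i)) : Constructible (⋃ i, A i) := by
  have h' := fun i => constructible_iff_list.mp (h i)
  choose M hM hMu using h'
  refine constructible_iff_list.mpr ⟨(List.ofFn M).flatten, ?_, ?_⟩
  · intro s hs
    rw [List.mem_flatten] at hs
    obtain ⟨l, hl, hsl⟩ := hs
    rw [List.mem_ofFn] at hl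
    obtain ⟨i, rfl⟩ := hl
    exact hM i s hsl
  · ext x
    simp only [mem_iUnion, exists_prop, List.mem_flatten, List.mem_ofFn]
    constructor
    · rintro ⟨i, hx⟩
      rw [hMu i] at hx
      simp only [mem_iUnion, exists_prop] at hx
      obtain ⟨s, hs, hxs⟩ := hx
      exact ⟨s, ⟨M i, ⟨i, rfl⟩, hs⟩, hxs⟩
    · rintro ⟨s, ⟨l, ⟨i, rfl⟩, hs⟩, hx⟩
      refine ⟨i, ?_⟩
      rw [hMu i]
      exact mem_iUnion.mpr ⟨s, mem_iUnion.mpr ⟨hs, hx⟩⟩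

lemma strat_list (M : List (Set (Pt m))) (hM : ∀ s ∈ M, ZarLocClosed s) :
    ∃ N : List (Set (Pt m)), (∀ s ∈ N, ZarLocClosed s) ∧ N.Pairwise Disjoint ∧
      (⋃ s ∈ N, s) = ⋃ s ∈ M, s := by
  induction M with
  | nil => exact ⟨[], by simp, by simp, by simp⟩
  | cons L M ih =>
    obtain ⟨N, hN, hNd, hNu⟩ := ih (fun s hs => hM s (List.mem_cons_of_mem _ hs))
    obtain ⟨Z, Z', hZ, hZ', hL⟩ := hM L List.mem_cons_self
    refine ⟨L :: (N.map (· \ Z) ++ N.map (· ∩ (Z ∩ Z'))), ?_, ?_, ?_⟩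
    · intro s hs
      rcases List.mem_cons.mp hs with rfl | hs
      · exact ⟨Z, Z', hZ, hZ', hL⟩
      rcases List.mem_append.mp hs with hs | hs <;>
        · simp only [List.mem_map] at hs
          obtain ⟨t, ht, rfl⟩ := hs
          first
            | exact (hN t ht).diff_closed hZ
            | exact (hN t ht).inter_closed (hZ.inter hZ')
    · rw [List.pairwise_cons]
      constructor
      · intro s hs
        rcases List.mem_append.mp hs with hs | hs <;>
          simp only [List.mem_map] at hs <;> obtain ⟨t, ht, rfl⟩ := hs
        · rw [Set.disjoint_left]
          intro x hxL hxt
          exact hxt.2 (hL ▸ hxL).1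
        · rw [Set.disjoint_left]
          intro x hxL hxt
          exact (hL ▸ hxL).2 hxt.2.2
      · rw [List.pairwise_append]
        refine ⟨hNd.map _ (fun a b hab => hab.mono diff_subset inter_subset_left),
          hNd.map _ (fun a b hab => hab.mono inter_subset_left inter_subset_left),
          ?_⟩
        rintro a ha b hb
        simp only [List.mem_map] at ha hb
        obtain ⟨s, hs, rfl⟩ := ha; obtain ⟨t, ht, rfl⟩ := hb
        rw [Set.disjoint_left]
        rintro x ⟨_, hxZ⟩ ⟨_, hxZ2, _⟩
        exact hxZ hxZ2
    · ext x
      simp only [mem_iUnion, exists_prop, List.mem_cons, List.mem_append, List.mem_map]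
      have hmem : (∃ s ∈ N, x ∈ s) ↔ (∃ s ∈ M, x ∈ s) := by
        have := Set.ext_iff.mp hNu x
        simpa using this
      constructor
      · rintro ⟨s, rfl | (⟨t, ht, rfl⟩ | ⟨t, ht, rfl⟩), hx⟩
        · exact ⟨s, Or.inl rfl, hx⟩
        · obtain ⟨u, hu, hxu⟩ := hmem.mp ⟨t, ht, hx.1⟩
          exact ⟨u, Or.inr hu, hxu⟩
        · obtain ⟨u, hu, hxu⟩ := hmem.mp ⟨t, ht, hx.1⟩
          exact ⟨u, Or.inr hu, hxu⟩
      · rintro ⟨s, rfl | hs, hx⟩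
        · exact ⟨s, Or.inl rfl, hx⟩
        · by_cases hxL : x ∈ L
          · exact ⟨L, Or.inl rfl, hxL⟩
          · obtain ⟨t, ht, hxt⟩ := hmem.mpr ⟨s, hs, hx⟩
            by_cases hxZ : x ∈ Z
            · have hxZ' : x ∈ Z' := by
                by_contra hc
                exact hxL (hL ▸ ⟨hxZ, hc⟩)
              exact ⟨t ∩ (Z ∩ Z'), Or.inr (Or.inr ⟨t, ht, rfl⟩), hxt, hxZ, hxZ'⟩
            · exact ⟨t \ Z, Or.inr (Or.inl ⟨t, ht, rfl⟩), hxt, hxZ⟩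

/-- Every constructible set admits a stratification. -/
lemma Constructible.exists_stratification {A : Set (Pt m)} (h : Constructible A) :
    ∃ (k : ℕ) (S : Fin k → Set (Pt m)), IsStratification A S := by
  obtain ⟨M, hM, rfl⟩ := constructible_iff_list.mp h
  obtain ⟨N, hN, hNd, hNu⟩ := strat_list M hM
  refine ⟨N.length, N.get, fun i => hN _ (N.get_mem _), ?_, ?_⟩
  · intro i j hij
    rcases lt_or_gt_of_ne hij with hlt | hlt
    · exact List.pairwise_iff_get.mp hNd i j hlt
    · exact (List.pairwise_iff_get.mp hNd j i hlt).symm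
  · rw [← hNu]
    ext x
    simp only [mem_iUnion, exists_prop]
    constructor
    · rintro ⟨i, hx⟩; exact ⟨N.get i, N.get_mem _, hx⟩
    · rintro ⟨s, hs, hx⟩
      obtain ⟨i, rfl⟩ := List.mem_iff_get.mp hs
      exact ⟨i, hx⟩

lemma ZarClosed.preimage_init {Z : Set (Pt m)} (h : ZarClosed Z) :
    ZarClosed {z : Pt (m + 1) | Fin.init z ∈ Z} := by
  obtain ⟨S, rfl⟩ := h
  refine ⟨rename Fin.castSucc '' S, ?_⟩
  ext z
  simp only [mem_setOf_eq, Set.mem_image]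
  constructor
  · rintro h p ⟨q, hq, rfl⟩
    rw [eval_rename]
    exact h q hq
  · intro h q hq
    have := h _ ⟨q, hq, rfl⟩
    rwa [eval_rename] at this

lemma ZarLocClosed.preimage_init {L : Set (Pt m)} (h : ZarLocClosed L) :
    ZarLocClosed {z : Pt (m + 1) | Fin.init z ∈ L} := by
  obtain ⟨Z, Z', hZ, hZ', rfl⟩ := h
  refine ⟨_, _, hZ.preimage_init, hZ'.preimage_init, ?_⟩
  ext z; simp only [mem_setOf_eq, mem_diff]

lemma Constructible.preimage_init {A : Set (Pt m)} (h : Constructible A) :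
    Constructible {z : Pt (m + 1) | Fin.init z ∈ A} := by
  obtain ⟨k, L, hL, rfl⟩ := h
  refine ⟨k, fun i => {z | Fin.init z ∈ L i}, fun i => (hL i).preimage_init, ?_⟩
  ext z; simp [mem_iUnion]

/-- Product refinement of two stratifications. -/
lemma IsStratification.refine {A B : Set (Pt m)} {k r : ℕ}
    {S : Fin k → Set (Pt m)} {T : Fin r → Set (Pt m)}
    (hS : IsStratification A S) (hT : IsStratification B T) :
    ∃ (n : ℕ) (W : Fin n → Set (Pt m)), IsStratification (A ∩ B) W ∧
      ∀ i, ∃ a b, W i = S a ∩ T b := by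
  refine ⟨k * r, fun i => S (finProdFinEquiv.symm i).1 ∩ T (finProdFinEquiv.symm i).2,
    ⟨fun i => (hS.1 _).inter (hT.1 _), ?_, ?_⟩, fun i => ⟨_, _, rfl⟩⟩
  · intro i j hij
    have hne : (finProdFinEquiv.symm i) ≠ (finProdFinEquiv.symm j) :=
      fun hc => hij (finProdFinEquiv.symm.injective hc)
    by_cases h1 : (finProdFinEquiv.symm i).1 = (finProdFinEquiv.symm j).1
    · have h2 : (finProdFinEquiv.symm i).2 ≠ (finProdFinEquiv.symm j).2 := by
        intro hc; exact hne (Prod.ext h1 hc)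
      exact ((hT.2.1 h2).mono inter_subset_right inter_subset_right)
    · exact ((hS.2.1 h1).mono inter_subset_left inter_subset_left)
  · ext x
    simp only [mem_iUnion, mem_inter_iff]
    constructor
    · rintro ⟨i, hx1, hx2⟩
      exact ⟨hS.2.2 ▸ mem_iUnion.mpr ⟨_, hx1⟩, hT.2.2 ▸ mem_iUnion.mpr ⟨_, hx2⟩⟩
    · rintro ⟨hA, hB⟩
      obtain ⟨a, ha⟩ := mem_iUnion.mp (hS.2.2.symm ▸ hA)
      obtain ⟨b, hb⟩ := mem_iUnion.mp (hT.2.2.symm ▸ hB)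
      refine ⟨finProdFinEquiv (a, b), ?_⟩
      simp [ha, hb]

end RegHelpers

/-- A constructible-open subset `U` of an affine regulous variety
`X` is itself (isomorphic to) an affine regulous variety: if `f` is a regulous
function on the ambient space with zero set `X \ U` (inside `X`), then
`x ↦ (x, 1/f(x))` is a regulous isomorphism of `U` onto the Euclidean-closed
constructible set `Y = {(x,y) ∈ X × ℝ : f(x)·y = 1}`. -/
theorem stmt11 {m : ℕ} (X : Set (Pt m)) (hX : Constructible X) (hXcl : IsClosed X)
    (U : Set (Pt m)) (hU : ConstructibleOpenIn X U)
    (f : Pt m → ℝ) (hf : RegulousFnOn Set.univ f)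
    (hZf : {x ∈ X | f x = 0} = X \ U) :
    Constructible {z : Pt (m + 1) | Fin.init z ∈ X ∧ f (Fin.init z) * z (Fin.last m) = 1} ∧
    IsClosed {z : Pt (m + 1) | Fin.init z ∈ X ∧ f (Fin.init z) * z (Fin.last m) = 1} ∧
    RegulousMapOn U (fun x => (Fin.snoc x (f x)⁻¹ : Pt (m + 1))) ∧
    (fun x => (Fin.snoc x (f x)⁻¹ : Pt (m + 1))) '' U =
      {z : Pt (m + 1) | Fin.init z ∈ X ∧ f (Fin.init z) * z (Fin.last m) = 1} ∧
    RegulousMapOn {z : Pt (m + 1) | Fin.init z ∈ X ∧ f (Fin.init z) * z (Fin.last m) = 1}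
      (fun z => Fin.init z) ∧
    (∀ x ∈ U, Fin.init (Fin.snoc x (f x)⁻¹ : Pt (m + 1)) = x) ∧
    (∀ z ∈ {z : Pt (m + 1) | Fin.init z ∈ X ∧ f (Fin.init z) * z (Fin.last m) = 1},
      (Fin.snoc (Fin.init z) (f (Fin.init z))⁻¹ : Pt (m + 1)) = z) := by
  obtain ⟨hfc, k, S, hSstrat, hSreg⟩ := hf
  have hfcont : Continuous f := by
    rw [← continuousOn_univ]; exact hfc
  have hUX : U ⊆ X := hU.1
  have hfU : ∀ x ∈ U, f x ≠ 0 := by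
    intro x hx hfx
    have : x ∈ X \ U := hZf ▸ (⟨hUX hx, hfx⟩ : x ∈ {x ∈ X | f x = 0})
    exact this.2 hx
  have hmemU : ∀ x, x ∈ X → f x ≠ 0 → x ∈ U := by
    intro x hxX hfx
    by_contra hc
    exact hfx (Set.ext_iff.mp hZf x |>.mpr ⟨hxX, hc⟩).2
  have hUc : Constructible U := by
    obtain ⟨_, F, hFc, _, hUeq⟩ := hU
    rw [hUeq, diff_eq]
    exact hX.inter hFc.compl
  have hcover : ∀ x : Pt m, ∃ i, x ∈ S i := fun x =>
    mem_iUnion.mp (hSstrat.2.2.symm ▸ mem_univ x)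
  choose p q hpq using hSreg
  -- the defining polynomials of the graph pieces
  set r : Fin k → MvPolynomial (Fin (m + 1)) ℝ := fun i =>
    rename Fin.castSucc (p i) * MvPolynomial.X (Fin.last m) - rename Fin.castSucc (q i) with hr
  have hevalr : ∀ i (z : Pt (m + 1)),
      eval z (r i) = eval (Fin.init z) (p i) * z (Fin.last m) - eval (Fin.init z) (q i) := by
    intro i z
    simp only [hr, map_sub, map_mul, eval_X, eval_rename]
    rfl
  set Y := {z : Pt (m + 1) | Fin.init z ∈ X ∧ f (Fin.init z) * z (Fin.last m) = 1} with hY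
  have hEcl : ∀ i, ZarClosed {z : Pt (m + 1) | eval z (r i) = 0} :=
    fun i => ⟨{r i}, by ext z; simp⟩
  have hYeq : Y = ⋃ i, ({z : Pt (m + 1) | Fin.init z ∈ X} ∩ {z | Fin.init z ∈ S i} ∩
      {z | eval z (r i) = 0}) := by
    ext z
    simp only [hY, mem_setOf_eq, mem_iUnion, mem_inter_iff]
    constructor
    · rintro ⟨hzX, hz1⟩
      obtain ⟨i, hi⟩ := hcover (Fin.init z)
      obtain ⟨hq0, hfq⟩ := hpq i _ hi
      refine ⟨i, ⟨hzX, hi⟩, ?_⟩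
      rw [hevalr]
      linear_combination (-(z (Fin.last m))) * hfq + eval (Fin.init z) (q i) * hz1
    · rintro ⟨i, ⟨hzX, hzS⟩, hzE⟩
      obtain ⟨hq0, hfq⟩ := hpq i _ hzS
      refine ⟨hzX, ?_⟩
      rw [hevalr] at hzE
      have h2 : (f (Fin.init z) * z (Fin.last m) - 1) * eval (Fin.init z) (q i) = 0 := by
        linear_combination z (Fin.last m) * hfq + hzE
      rcases mul_eq_zero.mp h2 with h | h
      · linarith [sub_eq_zero.mp h]
      · exact absurd h hq0
  have hYconstr : Constructible Y := by
    rw [hYeq]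
    exact constructible_iUnion fun i =>
      (hX.preimage_init.inter (hSstrat.1 i).preimage_init.constructible).inter
        (hEcl i).zarLocClosed.constructible
  have hinitc : Continuous (fun z : Pt (m + 1) => Fin.init z) :=
    continuous_pi fun i => continuous_apply _
  have hYcl : IsClosed Y := by
    have : Y = (fun z : Pt (m + 1) => Fin.init z) ⁻¹' X ∩
        (fun z : Pt (m + 1) => f (Fin.init z) * z (Fin.last m)) ⁻¹' {1} := by
      ext z; simp [hY]
    rw [this]
    exact (hXcl.preimage hinitc).inter
      (isClosed_singleton.preimage ((hfcont.comp hinitc).mul (continuous_apply _)))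
  refine ⟨hYconstr, hYcl, ?_, ?_, ?_, fun x _ => Fin.init_snoc _ _, ?_⟩
  · -- RegulousMapOn U (snoc x (f x)⁻¹)
    constructor
    · rw [continuousOn_pi]
      intro j
      induction j using Fin.lastCases with
      | last =>
        simp only [Fin.snoc_last]
        exact ContinuousOn.inv₀ hfcont.continuousOn hfU
      | cast i =>
        simp only [Fin.snoc_castSucc]
        exact (continuous_apply i).continuousOn
    · obtain ⟨rU, M, hM⟩ := hUc.exists_stratification
      obtain ⟨n, W, hW, hWsub⟩ := hM.refine hSstrat
      rw [inter_univ] at hW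
      refine ⟨n, W, hW, fun i j => ?_⟩
      obtain ⟨a, b, hab⟩ := hWsub i
      have hWU : W i ⊆ U := by
        rw [hab]
        refine inter_subset_left.trans ?_
        rw [← hM.2.2]
        exact subset_iUnion _ a
      have hWS : W i ⊆ S b := hab ▸ inter_subset_right
      induction j using Fin.lastCases with
      | last =>
        refine ⟨q b, p b, fun x hx => ?_⟩
        obtain ⟨hq0, hfq⟩ := hpq b x (hWS hx)
        have hfx : f x ≠ 0 := hfU x (hWU hx)
        have hp0 : eval x (p b) ≠ 0 := by
          rw [← hfq]; exact mul_ne_zero hfx hq0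
        refine ⟨hp0, ?_⟩
        simp only [Fin.snoc_last]
        rw [← hfq, ← mul_assoc, inv_mul_cancel₀ hfx, one_mul]
      | cast i0 =>
        refine ⟨MvPolynomial.X i0, 1, fun x hx => ?_⟩
        simp [Fin.snoc_castSucc]
  · -- image equality
    ext z
    simp only [mem_image, hY, mem_setOf_eq]
    constructor
    · rintro ⟨x, hxU, rfl⟩
      rw [Fin.init_snoc, Fin.snoc_last]
      exact ⟨hUX hxU, mul_inv_cancel₀ (hfU x hxU)⟩
    · rintro ⟨hzX, hz1⟩
      have hfz : f (Fin.init z) ≠ 0 := left_ne_zero_of_mul_eq_one hz1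
      refine ⟨Fin.init z, hmemU _ hzX hfz, ?_⟩
      rw [inv_eq_of_mul_eq_one_right hz1, Fin.snoc_init_self]
  · -- RegulousMapOn Y init
    constructor
    · exact hinitc.continuousOn
    · obtain ⟨n, W, hW⟩ := hYconstr.exists_stratification
      exact ⟨n, W, hW, fun i j => ⟨MvPolynomial.X (Fin.castSucc j), 1, fun z hz => by simp [Fin.init]⟩⟩
  · -- inverse identity
    rintro z ⟨hzX, hz1⟩
    rw [inv_eq_of_mul_eq_one_right hz1, Fin.snoc_init_self]
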